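/- Fix positive conductances (C_k)_{k≥0} assigned by age. Then there exists a constant C₀ < ∞, independent of n, such that CAP(A) ≤ C₀·|A| for every n ≥ 1 and every A ⊆ 𝕃₀⁽ⁿ⁾. Consequently, for the sequence of clustering functions Φ_n = CAP on 𝕃₀⁽ⁿ⁾, there is no wetting transition: J* = −∞, i.e. the free energy ζ(J) = lim_n 2^{−n} ln ∑_{A ⊆ 𝕃₀⁽ⁿ⁾} e^{J|A| − CAP(A)} is strictly positive for every J ∈ ℝ. -/

import Mathlib

open Filter
open scoped Classical

noncomputable section

namespace PWC

/-- Leaves of the binary tree `𝕋⁽ⁿ⁾` of depth `n`: binary words of length `n`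
(coordinate `0` is the first step away from the root). -/
abbrev Leaf (n : ℕ) := Fin n → Bool

/-- The age (distance from the leaves) of the youngest common ancestor `u ∧ v` of two
leaves: `n` minus the length of their longest common prefix. -/
def meetAge {n : ℕ} (u v : Leaf n) : ℕ :=
  if u = v then 0 else n - sInf {i : ℕ | ∃ h : i < n, u ⟨i, h⟩ ≠ v ⟨i, h⟩}

/-- Canonical representative (as a leaf) of the ancestor of `u` at age `k`:
keep the first `n - k` coordinates and pad by `false`. -/
def trunc {n : ℕ} (k : ℕ) (u : Leaf n) : Leaf n :=
  fun i => if (i : ℕ) < n - k then u i else false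

/-- The branching points `ℬ(A) ∩ 𝕃_k` of `A` of age `k`, encoded by the canonical
representatives of the corresponding ancestors. -/
def branchPts {n : ℕ} (A : Finset (Leaf n)) (k : ℕ) : Finset (Leaf n) :=
  ((A ×ˢ A).filter (fun p => meetAge p.1 p.2 = k)).image (fun p => trunc k p.1)

/-- `b_k(A)`: the number of branching points of `A` of age `k`. -/
def bcount {n : ℕ} (A : Finset (Leaf n)) (k : ℕ) : ℕ := (branchPts A k).card

/-- `b_{k,ℓ}(A)`: the number of branching points of `A` of age `ℓ` whose direct
branching ancestor has age `k`; for `k = n+1` the indicator that the oldest branching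
point of `A` has age `ℓ` (i.e. the branching points at age `ℓ` having no strictly older
branching ancestor). -/
def b2count {n : ℕ} (A : Finset (Leaf n)) (k l : ℕ) : ℕ :=
  if k = n + 1 then
    ((branchPts A l).filter (fun w => ∀ j, l < j → j ≤ n → trunc j w ∉ branchPts A j)).card
  else
    ((branchPts A l).filter (fun w => trunc k w ∈ branchPts A k ∧
      ∀ j, l < j → j < k → trunc j w ∉ branchPts A j)).card

/-- `A ≺ B` : `A` is more clustered than `B`. -/
def MoreClustered {n : ℕ} (A B : Finset (Leaf n)) : Prop :=
  ∃ σ : Leaf n → Leaf n, Set.BijOn σ ↑A ↑B ∧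
    ∀ u ∈ A, ∀ v ∈ A, meetAge u v ≤ meetAge (σ u) (σ v)

/-- `A ∼ B` : the subtrees of `𝕋⁽ⁿ⁾` generated by `A` and `B` are graph-isomorphic,
i.e. there is a bijection of the leaf sets preserving all meet ages. -/
def EquivClustered {n : ℕ} (A B : Finset (Leaf n)) : Prop :=
  ∃ σ : Leaf n → Leaf n, Set.BijOn σ ↑A ↑B ∧
    ∀ u ∈ A, ∀ v ∈ A, meetAge (σ u) (σ v) = meetAge u v

/-- A clustering function: vanishes on `∅` and is invariant under isomorphism of the
generated subtrees. -/
def IsClusteringFn {n : ℕ} (Φ : Finset (Leaf n) → ℝ) : Prop :=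
  Φ ∅ = 0 ∧ ∀ A B : Finset (Leaf n), EquivClustered A B → Φ A = Φ B

/-- A monotone clustering function. -/
def IsMonotoneClusteringFn {n : ℕ} (Φ : Finset (Leaf n) → ℝ) : Prop :=
  IsClusteringFn Φ ∧
    (∀ A B : Finset (Leaf n), MoreClustered A B → Φ A ≤ Φ B) ∧
    (∀ A B : Finset (Leaf n), Disjoint A B → Φ (A ∪ B) ≤ Φ A + Φ B)

/-- The partition function `Z_n^{Φ,J}`. -/
def Z (n : ℕ) (Φ : Finset (Leaf n) → ℝ) (J : ℝ) : ℝ :=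
  ∑ A : Finset (Leaf n), Real.exp (J * (A.card : ℝ) - Φ A)

/-- The finite-volume free energy `ζ_n^Φ(J) = 2⁻ⁿ ln Z_n^{Φ,J}`. -/
def zetaN (n : ℕ) (Φ : Finset (Leaf n) → ℝ) (J : ℝ) : ℝ :=
  Real.log (Z n Φ J) / 2 ^ n

/-- The canonical partition function `W_n^Φ(a₀)`. -/
def W (n : ℕ) (Φ : Finset (Leaf n) → ℝ) (a₀ : ℕ) : ℝ :=
  ∑ A ∈ Finset.univ.filter (fun A : Finset (Leaf n) => A.card = a₀), Real.exp (-Φ A)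

/-- The finite-volume canonical free energy `ω_n^Φ(ε) = 2⁻ⁿ ln W_n^Φ(ε 2ⁿ)` (for a
dyadic `ε ∈ [0,1]` and `n` large, `⌊ε 2ⁿ⌋ = ε 2ⁿ`). -/
def omegaN (n : ℕ) (Φ : Finset (Leaf n) → ℝ) (ε : ℝ) : ℝ :=
  Real.log (W n Φ ⌊ε * 2 ^ n⌋₊) / 2 ^ n

/-- The expected density `ρ_n^Φ(J)` of the dry set under the PWC measure. -/
def rhoN (n : ℕ) (Φ : Finset (Leaf n) → ℝ) (J : ℝ) : ℝ :=
  (∑ A : Finset (Leaf n), (A.card : ℝ) * Real.exp (J * (A.card : ℝ) - Φ A)) /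
    (2 ^ n * Z n Φ J)

/-- A dyadic rational. -/
def IsDyadic (x : ℝ) : Prop := ∃ (k : ℤ) (m : ℕ), x = (k : ℝ) / 2 ^ m

/-- The hypotheses of the general theory (Proposition 1.2): each `Φ_n` (for `n ≥ 1`) is
a monotone, non-negative clustering function, and `Φ_n(A) ≤ Φ_{n-1}(A) + γ_n` for any
`A` contained in the leaf set of one of the two subtrees of `𝕋⁽ⁿ⁾` rooted at a child of
the root (identified with `𝕋⁽ⁿ⁻¹⁾` by prepending the corresponding letter), where
`γ_n ≥ 0` and `∑ γ_n 2⁻ⁿ < ∞`. -/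
structure GoodSeq (Φ : ∀ n, Finset (Fin n → Bool) → ℝ) (γ : ℕ → ℝ) : Prop where
  mono : ∀ n, 1 ≤ n → IsMonotoneClusteringFn (Φ n)
  nonneg : ∀ n, 1 ≤ n → ∀ A, 0 ≤ Φ n A
  gamma_nonneg : ∀ n, 0 ≤ γ n
  gamma_summable : Summable fun n => γ n / 2 ^ n
  subtree : ∀ (n : ℕ) (b : Bool) (A : Finset (Fin n → Bool)),
    Φ (n + 1) (A.image fun u => Fin.cons b u) ≤ Φ n A + γ (n + 1)

/-- The first order branching clustering function with parameters `(h_k)_{k=0}^n`, `h`. -/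
def foPhi (n : ℕ) (hs : ℕ → ℝ) (h : ℝ) (A : Finset (Leaf n)) : ℝ :=
  if A = ∅ then 0 else (∑ k ∈ Finset.range (n + 1), hs k * (bcount A k : ℝ)) + h

/-- The second order branching clustering function with parameters
`(h_{k,ℓ})_{0 ≤ ℓ < k ≤ n+1}`, `h`. -/
def soPhi (n : ℕ) (H : ℕ → ℕ → ℝ) (h : ℝ) (A : Finset (Leaf n)) : ℝ :=
  if A = ∅ then 0
  else (∑ k ∈ Finset.range (n + 2), ∑ l ∈ Finset.range k, H k l * (b2count A k l : ℝ)) + h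

/-- A non-decreasing (infinite) triangular array. -/
def ArrayMono (H : ℕ → ℕ → ℝ) : Prop :=
  ∀ k k' l l' : ℕ, l < k → l' < k' → k ≤ k' → l ≤ l' → H k l ≤ H k' l'

/-- The Dirichlet energy on `𝕋⁽ⁿ⁾` of `f` (vertices encoded as words of length `≤ n`,
read from the root; a vertex of length `m` has age `n - m` and its parent edge has
conductance `C (n - m)`). -/
def energy (n : ℕ) (C : ℕ → ℝ) (f : List Bool → ℝ) : ℝ :=
  ∑ m ∈ Finset.Icc 1 n, ∑ v : Fin m → Bool,
    C (n - m) * (f (List.ofFn v) - f (List.ofFn v).dropLast) ^ 2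

/-- The capacity of a set of leaves `A ⊆ 𝕃₀⁽ⁿ⁾`. -/
def cap (n : ℕ) (C : ℕ → ℝ) (A : Finset (Leaf n)) : ℝ :=
  sInf {x : ℝ | ∃ f : List Bool → ℝ, f [] = 1 ∧ (∀ u ∈ A, f (List.ofFn u) = 0) ∧
    x = energy n C f}


section StmtNineteenAux

variable (C : ℕ → ℝ)

lemma energy_nonneg' (n : ℕ) (hC : ∀ k, 0 ≤ C k) (f : List Bool → ℝ) :
    0 ≤ energy n C f := by
  apply Finset.sum_nonneg; intro m _
  apply Finset.sum_nonneg; intro v _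
  exact mul_nonneg (hC _) (sq_nonneg _)

lemma cap_nonneg' (n : ℕ) (hC : ∀ k, 0 ≤ C k) (A : Finset (Leaf n)) :
    0 ≤ cap n C A := by
  apply Real.sInf_nonneg
  rintro x ⟨f, -, -, rfl⟩
  exact energy_nonneg' C n hC f

lemma cap_bddBelow' (n : ℕ) (hC : ∀ k, 0 ≤ C k) (A : Finset (Leaf n)) :
    BddBelow {x : ℝ | ∃ f : List Bool → ℝ, f [] = 1 ∧ (∀ u ∈ A, f (List.ofFn u) = 0) ∧
      x = energy n C f} := by
  refine ⟨0, ?_⟩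
  rintro x ⟨f, -, -, rfl⟩
  exact energy_nonneg' C n hC f

/-- indicator-type test function -/
def flist {n : ℕ} (A : Finset (Leaf n)) : List Bool → ℝ :=
  fun w => if ∃ u ∈ A, w = List.ofFn u then 0 else 1

lemma flist_of_length_ne {n : ℕ} (A : Finset (Leaf n)) (w : List Bool) (h : w.length ≠ n) :
    flist A w = 1 := by
  rw [flist, if_neg]
  rintro ⟨u, -, rfl⟩
  simp at h

lemma flist_ofFn {n : ℕ} (A : Finset (Leaf n)) (v : Leaf n) :
    flist A (List.ofFn v) = if v ∈ A then 0 else 1 := by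
  unfold flist
  congr 1
  simp only [eq_iff_iff]
  constructor
  · rintro ⟨u, hu, h⟩
    rwa [List.ofFn_injective h]
  · exact fun h => ⟨v, h, rfl⟩

lemma energy_flist (n : ℕ) (hn : 1 ≤ n) (A : Finset (Leaf n)) :
    energy n C (flist A) = C 0 * A.card := by
  unfold energy
  rw [Finset.sum_eq_single n]
  · have hd : ∀ v : Leaf n, flist A (List.ofFn v).dropLast = 1 := fun v =>
      flist_of_length_ne A _ (by simp; omega)
    have key : ∀ v : Leaf n,
        C (n - n) * (flist A (List.ofFn v) - flist A (List.ofFn v).dropLast) ^ 2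
          = if v ∈ A then C 0 else 0 := by
      intro v
      rw [hd v, flist_ofFn, Nat.sub_self]
      by_cases h : v ∈ A <;> simp [h]
    rw [Finset.sum_congr rfl (fun v _ => key v), Finset.sum_ite_mem, Finset.univ_inter,
      Finset.sum_const, nsmul_eq_mul, mul_comm]
  · intro m hm hmn
    apply Finset.sum_eq_zero
    intro v _
    rw [flist_of_length_ne A _ (by simp at hm ⊢; omega),
      flist_of_length_ne A _ (by simp at hm ⊢; omega)]
    simp
  · intro h
    exact absurd (Finset.mem_Icc.mpr ⟨hn, le_refl n⟩) h

lemma flist_mem (n : ℕ) (hn : 1 ≤ n) (A : Finset (Leaf n)) :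
    (C 0 * A.card : ℝ) ∈ {x : ℝ | ∃ f : List Bool → ℝ, f [] = 1 ∧
      (∀ u ∈ A, f (List.ofFn u) = 0) ∧ x = energy n C f} := by
  refine ⟨flist A, flist_of_length_ne A [] (by simp; omega), ?_, (energy_flist C n hn A).symm⟩
  intro u hu
  rw [flist, if_pos ⟨u, hu, rfl⟩]

lemma cap_le_card (n : ℕ) (hn : 1 ≤ n) (hC : ∀ k, 0 ≤ C k) (A : Finset (Leaf n)) :
    cap n C A ≤ C 0 * A.card :=
  csInf_le (cap_bddBelow' C n hC A) (flist_mem C n hn A)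

end StmtNineteenAux

section StmtNineteenAux2

variable (C : ℕ → ℝ)

lemma ofFn_cons {m : ℕ} (b : Bool) (w : Fin m → Bool) :
    List.ofFn (Fin.cons b w) = b :: List.ofFn w := by
  rw [List.ofFn_succ]
  simp

lemma dropLast_cons_of_ne_nil' {α : Type*} (b : α) {l : List α} (h : l ≠ []) :
    (b :: l).dropLast = b :: l.dropLast := by
  obtain ⟨a, l', rfl⟩ := List.exists_cons_of_ne_nil h
  exact List.dropLast_cons₂

/-- Glue two functions on the depth-`n` trees into one on the depth-`(n+1)` tree. -/
def glue (f₀ f₁ : List Bool → ℝ) : List Bool → ℝ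
  | [] => 1
  | (b :: w) => if b then f₁ w else f₀ w

lemma energy_glue (n : ℕ) (f₀ f₁ : List Bool → ℝ) (h₀ : f₀ [] = 1) (h₁ : f₁ [] = 1) :
    energy (n + 1) C (glue f₀ f₁) = energy n C f₀ + energy n C f₁ := by
  unfold energy
  have h1 : Finset.Icc 1 (n + 1) = insert 1 ((Finset.Icc 1 n).image (· + 1)) := by
    rw [Finset.image_add_right_Icc]
    ext m; simp; omega
  rw [h1, Finset.sum_insert (by simp), Finset.sum_image (by intro a _ b _ h; simp only at h; omega)]
  have hfirst : ∑ v : Fin 1 → Bool,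
      C (n + 1 - 1) * (glue f₀ f₁ (List.ofFn v) - glue f₀ f₁ (List.ofFn v).dropLast) ^ 2 = 0 := by
    apply Finset.sum_eq_zero
    intro v _
    have : List.ofFn v = [v 0] := by simp [List.ofFn_succ]
    rw [this]
    cases hv : v 0 <;> simp [glue, h₀, h₁]
  rw [hfirst, zero_add, ← Finset.sum_add_distrib]
  apply Finset.sum_congr rfl
  intro m hm
  have hm1 : 1 ≤ m := (Finset.mem_Icc.mp hm).1
  have hsum : ∑ v : Fin (m + 1) → Bool,
      C (n + 1 - (m + 1)) * (glue f₀ f₁ (List.ofFn v) - glue f₀ f₁ (List.ofFn v).dropLast) ^ 2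
      = ∑ p : Bool × (Fin m → Bool),
        C (n + 1 - (m + 1)) *
          (glue f₀ f₁ (List.ofFn (Fin.cons p.1 p.2)) -
            glue f₀ f₁ (List.ofFn (Fin.cons p.1 p.2)).dropLast) ^ 2 :=
    (Fintype.sum_equiv (Fin.consEquiv (fun _ => Bool)) _ _ (fun p => by
      simp [Fin.consEquiv])).symm
  rw [hsum, Fintype.sum_prod_type, Fintype.sum_bool]
  have key : ∀ (b : Bool) (w : Fin m → Bool),
      C (n + 1 - (m + 1)) *
          (glue f₀ f₁ (List.ofFn (Fin.cons b w)) -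
            glue f₀ f₁ (List.ofFn (Fin.cons b w)).dropLast) ^ 2 =
        C (n - m) * ((if b then f₁ else f₀) (List.ofFn w) -
          (if b then f₁ else f₀) (List.ofFn w).dropLast) ^ 2 := by
    intro b w
    have hnn : List.ofFn w ≠ [] := by
      intro hh; have := congrArg List.length hh; simp at this; omega
    rw [ofFn_cons, dropLast_cons_of_ne_nil' b hnn]
    have hC1 : n + 1 - (m + 1) = n - m := by omega
    cases b <;> simp [glue, hC1]
  simp only [key]
  simp [add_comm]

end StmtNineteenAux2

section StmtNineteenAux3

variable (C : ℕ → ℝ)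

/-- Combine two leaf sets of depth-`n` trees into one of the depth-`(n+1)` tree. -/
def g2 {n : ℕ} (B₀ B₁ : Finset (Leaf n)) : Finset (Leaf (n + 1)) :=
  B₀.image (Fin.cons false) ∪ B₁.image (Fin.cons true)

lemma mem_g2_cons {n : ℕ} (B₀ B₁ : Finset (Leaf n)) (b : Bool) (w : Leaf n) :
    Fin.cons b w ∈ g2 B₀ B₁ ↔ w ∈ (if b then B₁ else B₀) := by
  simp only [g2, Finset.mem_union, Finset.mem_image]
  constructor
  · rintro (⟨a, ha, hh⟩ | ⟨a, ha, hh⟩)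
    · have hb : b = false := by have := congrFun hh 0; simpa using this.symm
      subst hb
      have : a = w := Fin.cons_right_injective _ hh
      subst this; simpa using ha
    · have hb : b = true := by have := congrFun hh 0; simpa using this.symm
      subst hb
      have : a = w := Fin.cons_right_injective _ hh
      subst this; simpa using ha
  · intro hw
    cases b
    · exact Or.inl ⟨w, by simpa using hw, rfl⟩
    · exact Or.inr ⟨w, by simpa using hw, rfl⟩

lemma g2_injective {n : ℕ} :
    Function.Injective (fun p : Finset (Leaf n) × Finset (Leaf n) => g2 p.1 p.2) := by
  intro p q h
  simp only at h
  have gen : ∀ (b : Bool) (w : Leaf n),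
      w ∈ (if b then p.2 else p.1) ↔ w ∈ (if b then q.2 else q.1) := by
    intro b w
    rw [← mem_g2_cons p.1 p.2 b w, ← mem_g2_cons q.1 q.2 b w, h]
  have h0 : p.1 = q.1 := by ext w; simpa using gen false w
  have h1 : p.2 = q.2 := by ext w; simpa using gen true w
  exact Prod.ext h0 h1

lemma card_g2 {n : ℕ} (B₀ B₁ : Finset (Leaf n)) :
    (g2 B₀ B₁).card = B₀.card + B₁.card := by
  rw [g2, Finset.card_union_of_disjoint, Finset.card_image_of_injective _ (Fin.cons_right_injective _),
    Finset.card_image_of_injective _ (Fin.cons_right_injective _)]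
  rw [Finset.disjoint_left]
  rintro u hu0 hu1
  obtain ⟨a, -, rfl⟩ := Finset.mem_image.mp hu0
  obtain ⟨a', -, hh⟩ := Finset.mem_image.mp hu1
  have := congrFun hh 0
  simp at this

lemma cap_g2 (n : ℕ) (hn : 1 ≤ n) (hC : ∀ k, 0 ≤ C k) (B₀ B₁ : Finset (Leaf n)) :
    cap (n + 1) C (g2 B₀ B₁) ≤ cap n C B₀ + cap n C B₁ := by
  set S₀ := {x : ℝ | ∃ f : List Bool → ℝ, f [] = 1 ∧ (∀ u ∈ B₀, f (List.ofFn u) = 0) ∧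
      x = energy n C f} with hS₀
  set S₁ := {x : ℝ | ∃ f : List Bool → ℝ, f [] = 1 ∧ (∀ u ∈ B₁, f (List.ofFn u) = 0) ∧
      x = energy n C f} with hS₁
  have hc0 : cap n C B₀ = sInf S₀ := rfl
  have hc1 : cap n C B₁ = sInf S₁ := rfl
  have hne0 : S₀.Nonempty := ⟨_, flist_mem C n hn B₀⟩
  have hne1 : S₁.Nonempty := ⟨_, flist_mem C n hn B₁⟩
  have key : ∀ x₀ ∈ S₀, ∀ x₁ ∈ S₁, cap (n + 1) C (g2 B₀ B₁) ≤ x₀ + x₁ := by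
    rintro x₀ ⟨f₀, hf₀1, hf₀0, rfl⟩ x₁ ⟨f₁, hf₁1, hf₁0, rfl⟩
    apply csInf_le (cap_bddBelow' C (n + 1) hC _)
    refine ⟨glue f₀ f₁, rfl, ?_, (energy_glue C n f₀ f₁ hf₀1 hf₁1).symm⟩
    intro u hu
    have hu' : Fin.cons (u 0) (Fin.tail u) ∈ g2 B₀ B₁ := by
      rwa [Fin.cons_self_tail]
    rw [mem_g2_cons] at hu'
    have : u = Fin.cons (u 0) (Fin.tail u) := (Fin.cons_self_tail u).symm
    rw [this, ofFn_cons]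
    cases hb : u 0 <;> rw [hb] at hu' <;> simp at hu'
    · simpa [glue] using hf₀0 _ hu'
    · simpa [glue] using hf₁0 _ hu'
  have step1 : ∀ x₀ ∈ S₀, cap (n + 1) C (g2 B₀ B₁) ≤ x₀ + cap n C B₁ := by
    intro x₀ hx₀
    have : cap (n + 1) C (g2 B₀ B₁) - x₀ ≤ sInf S₁ :=
      le_csInf hne1 (fun x₁ hx₁ => by linarith [key x₀ hx₀ x₁ hx₁])
    rw [← hc1] at this; linarith
  have : cap (n + 1) C (g2 B₀ B₁) - cap n C B₁ ≤ sInf S₀ :=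
    le_csInf hne0 (fun x₀ hx₀ => by linarith [step1 x₀ hx₀])
  rw [← hc0] at this
  linarith

end StmtNineteenAux3

section StmtNineteenAux4

variable (C : ℕ → ℝ)

lemma cap_empty' (n : ℕ) (hC : ∀ k, 0 ≤ C k) : cap n C (∅ : Finset (Leaf n)) = 0 := by
  apply le_antisymm
  · apply csInf_le (cap_bddBelow' C n hC _)
    exact ⟨fun _ => 1, rfl, by simp, by simp [energy]⟩
  · exact cap_nonneg' C n hC _

lemma Z_pos (n : ℕ) (Φ : Finset (Leaf n) → ℝ) (J : ℝ) : 0 < Z n Φ J :=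
  Finset.sum_pos (fun _ _ => Real.exp_pos _) Finset.univ_nonempty

lemma one_lt_Z (n : ℕ) (hC : ∀ k, 0 ≤ C k) (J : ℝ) : 1 < Z n (cap n C) J := by
  have hsplit := Finset.sum_erase_add Finset.univ
    (fun A : Finset (Leaf n) => Real.exp (J * (A.card : ℝ) - cap n C A)) (Finset.mem_univ ∅)
  rw [Z, ← hsplit]
  have h0 : Real.exp (J * (((∅ : Finset (Leaf n)).card : ℝ)) - cap n C ∅) = 1 := by
    rw [cap_empty' C n hC]; simp
  show 1 < (∑ A ∈ Finset.univ.erase (∅ : Finset (Leaf n)),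
      Real.exp (J * (A.card : ℝ) - cap n C A)) +
      Real.exp (J * (((∅ : Finset (Leaf n)).card : ℝ)) - cap n C ∅)
  rw [h0]
  have hpos : 0 < ∑ A ∈ Finset.univ.erase (∅ : Finset (Leaf n)),
      Real.exp (J * (A.card : ℝ) - cap n C A) := by
    apply Finset.sum_pos (fun _ _ => Real.exp_pos _)
    exact ⟨{(fun _ => false : Leaf n)}, Finset.mem_erase.mpr ⟨by simp, Finset.mem_univ _⟩⟩
  linarith

lemma Z_sq_le (n : ℕ) (hn : 1 ≤ n) (hC : ∀ k, 0 ≤ C k) (J : ℝ) :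
    Z n (cap n C) J ^ 2 ≤ Z (n + 1) (cap (n + 1) C) J := by
  have h1 : Z n (cap n C) J ^ 2 = ∑ p : Finset (Leaf n) × Finset (Leaf n),
      Real.exp (J * (p.1.card : ℝ) - cap n C p.1) * Real.exp (J * (p.2.card : ℝ) - cap n C p.2) := by
    rw [sq, Z, Fintype.sum_mul_sum, Fintype.sum_prod_type]
  have h2 : ∀ p : Finset (Leaf n) × Finset (Leaf n),
      Real.exp (J * (p.1.card : ℝ) - cap n C p.1) * Real.exp (J * (p.2.card : ℝ) - cap n C p.2)
        ≤ Real.exp (J * ((g2 p.1 p.2).card : ℝ) - cap (n + 1) C (g2 p.1 p.2)) := by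
    intro p
    rw [← Real.exp_add]
    apply Real.exp_le_exp.mpr
    rw [card_g2]
    push_cast
    have h := cap_g2 C n hn hC p.1 p.2
    have hr : J * ((p.1.card : ℝ) + (p.2.card : ℝ)) = J * p.1.card + J * p.2.card := mul_add _ _ _
    rw [hr]
    linarith
  have h3 : ∑ p : Finset (Leaf n) × Finset (Leaf n),
      Real.exp (J * ((g2 p.1 p.2).card : ℝ) - cap (n + 1) C (g2 p.1 p.2))
      = ∑ A ∈ Finset.univ.image (fun p : Finset (Leaf n) × Finset (Leaf n) => g2 p.1 p.2),
        Real.exp (J * (A.card : ℝ) - cap (n + 1) C A) := by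
    rw [Finset.sum_image (fun x _ y _ hxy => g2_injective hxy)]
  calc Z n (cap n C) J ^ 2
      = _ := h1
    _ ≤ ∑ p : Finset (Leaf n) × Finset (Leaf n),
        Real.exp (J * ((g2 p.1 p.2).card : ℝ) - cap (n + 1) C (g2 p.1 p.2)) :=
        Finset.sum_le_sum (fun p _ => h2 p)
    _ = ∑ A ∈ Finset.univ.image (fun p : Finset (Leaf n) × Finset (Leaf n) => g2 p.1 p.2),
        Real.exp (J * (A.card : ℝ) - cap (n + 1) C A) := h3
    _ ≤ ∑ A : Finset (Leaf (n + 1)), Real.exp (J * (A.card : ℝ) - cap (n + 1) C A) :=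
        Finset.sum_le_sum_of_subset_of_nonneg (Finset.subset_univ _)
          (fun _ _ _ => (Real.exp_pos _).le)
    _ = Z (n + 1) (cap (n + 1) C) J := rfl

lemma zetaN_le_bound (n : ℕ) (Φ : Finset (Leaf n) → ℝ) (J : ℝ) (hΦ : ∀ A, 0 ≤ Φ A) :
    zetaN n Φ J ≤ Real.log 2 + |J| := by
  have hcard : ∀ A : Finset (Leaf n), (A.card : ℝ) ≤ 2 ^ n := by
    intro A
    have h1 : A.card ≤ Fintype.card (Leaf n) := Finset.card_le_univ A
    have h2 : Fintype.card (Leaf n) = 2 ^ n := by simp [Fintype.card_fun]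
    rw [h2] at h1
    exact_mod_cast h1
  have hterm : ∀ A : Finset (Leaf n), Real.exp (J * (A.card : ℝ) - Φ A)
      ≤ Real.exp (|J| * 2 ^ n) := by
    intro A
    apply Real.exp_le_exp.mpr
    have h1 : J * (A.card : ℝ) ≤ |J| * 2 ^ n :=
      calc J * (A.card : ℝ) ≤ |J * (A.card : ℝ)| := le_abs_self _
        _ = |J| * (A.card : ℝ) := by rw [abs_mul, Nat.abs_cast]
        _ ≤ |J| * 2 ^ n := mul_le_mul_of_nonneg_left (hcard A) (abs_nonneg J)
    linarith [hΦ A]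
  have hZ : Z n Φ J ≤ (2 : ℝ) ^ (2 ^ n) * Real.exp (|J| * 2 ^ n) := by
    calc Z n Φ J ≤ ∑ _A : Finset (Leaf n), Real.exp (|J| * 2 ^ n) :=
          Finset.sum_le_sum (fun A _ => hterm A)
      _ = (Fintype.card (Finset (Leaf n)) : ℝ) * Real.exp (|J| * 2 ^ n) := by
          rw [Finset.sum_const, Finset.card_univ, nsmul_eq_mul]
      _ = (2 : ℝ) ^ (2 ^ n) * Real.exp (|J| * 2 ^ n) := by
          rw [Fintype.card_finset]
          have : Fintype.card (Leaf n) = 2 ^ n := by simp [Fintype.card_fun]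
          rw [this]; push_cast; ring
  have hlog : Real.log (Z n Φ J) ≤ (2 : ℝ) ^ n * Real.log 2 + |J| * 2 ^ n := by
    calc Real.log (Z n Φ J) ≤ Real.log ((2 : ℝ) ^ (2 ^ n) * Real.exp (|J| * 2 ^ n)) :=
          Real.log_le_log (Z_pos n Φ J) hZ
      _ = (2 : ℝ) ^ n * Real.log 2 + |J| * 2 ^ n := by
          rw [Real.log_mul (by positivity) (Real.exp_pos _).ne', Real.log_pow, Real.log_exp]
          push_cast; ring
  unfold zetaN
  rw [div_le_iff₀ (by positivity)]
  nlinarith [hlog]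

lemma zeta_step (n : ℕ) (hn : 1 ≤ n) (hC : ∀ k, 0 ≤ C k) (J : ℝ) :
    zetaN n (cap n C) J ≤ zetaN (n + 1) (cap (n + 1) C) J := by
  have hZ := Z_pos n (cap n C) J
  have h2 : Real.log (Z n (cap n C) J ^ 2) ≤ Real.log (Z (n + 1) (cap (n + 1) C) J) :=
    Real.log_le_log (pow_pos hZ 2) (Z_sq_le C n hn hC J)
  rw [Real.log_pow] at h2
  unfold zetaN
  rw [div_le_div_iff₀ (by positivity) (by positivity)]
  have hp : (0 : ℝ) < 2 ^ n := by positivity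
  have he : (2 : ℝ) ^ (n + 1) = 2 * 2 ^ n := by ring
  rw [he]
  push_cast at h2
  nlinarith [h2, hp]

end StmtNineteenAux4

/-- Proposition 1.23: for positive conductances assigned by age,
there is `C₀ < ∞` independent of `n` with `CAP(A) ≤ C₀|A|` for all `n ≥ 1` and
`A ⊆ 𝕃₀⁽ⁿ⁾`; consequently for `Φ_n = CAP` there is no wetting transition: the free
energy `ζ(J)` exists and is strictly positive for every `J ∈ ℝ` (`J* = -∞`). -/
theorem stmt19 (C : ℕ → ℝ) (hC : ∀ k, 0 < C k) :
    ∃ C₀ : ℝ,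
      (∀ n : ℕ, 1 ≤ n → ∀ A : Finset (Leaf n), cap n C A ≤ C₀ * (A.card : ℝ)) ∧
      ∃ ζ : ℝ → ℝ,
        (∀ J : ℝ, Tendsto (fun n => zetaN n (cap n C) J) atTop (nhds (ζ J))) ∧
        ∀ J : ℝ, 0 < ζ J := by
  have hC' : ∀ k, 0 ≤ C k := fun k => (hC k).le
  refine ⟨C 0, fun n hn A => cap_le_card C n hn hC' A, ?_⟩
  refine ⟨fun J => ⨆ m, zetaN (m + 1) (cap (m + 1) C) J, ?_, ?_⟩
  · intro J
    have hmono : Monotone (fun m => zetaN (m + 1) (cap (m + 1) C) J) :=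
      monotone_nat_of_le_succ (fun m => zeta_step C (m + 1) (by omega) hC' J)
    have hbdd : BddAbove (Set.range fun m => zetaN (m + 1) (cap (m + 1) C) J) := by
      refine ⟨Real.log 2 + |J|, ?_⟩
      rintro x ⟨m, rfl⟩
      exact zetaN_le_bound (m + 1) _ J (fun A => cap_nonneg' C (m + 1) hC' A)
    have h := tendsto_atTop_ciSup hmono hbdd
    exact (tendsto_add_atTop_iff_nat 1).mp h
  · intro J
    have hbdd : BddAbove (Set.range fun m => zetaN (m + 1) (cap (m + 1) C) J) := by
      refine ⟨Real.log 2 + |J|, ?_⟩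
      rintro x ⟨m, rfl⟩
      exact zetaN_le_bound (m + 1) _ J (fun A => cap_nonneg' C (m + 1) hC' A)
    have hpos : 0 < zetaN 1 (cap 1 C) J := by
      unfold zetaN
      apply div_pos
      · exact Real.log_pos (one_lt_Z C 1 hC' J)
      · positivity
    have hle : zetaN 1 (cap 1 C) J ≤ ⨆ m, zetaN (m + 1) (cap (m + 1) C) J :=
      le_ciSup hbdd 0
    linarith


end PWC
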